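/- Let H be a complex Hilbert space, A a commutative unital C*-subalgebra of B(H), and T ∈ B(H) an isometry satisfying axiom (A1). For a ∈ A, let 𝓛 : A → A be the bounded linear operator 𝓛(b) = T*(a*a)bT (multiplication of the transfer map by |a|² = a*a). Then the spectral radius of the operator aT ∈ B(H) satisfies r(aT)² = r(𝓛), where r(𝓛) is the spectral radius of 𝓛 regarded as an element of the Banach algebra of bounded linear operators on the Banach space A. -/

import Mathlib

open ContinuousLinearMap
open scoped ENNReal NNReal Topology

/-- under axiom (A1), the spectral radius of the weighted shift `aT ∈ B(H)`
satisfies `r(aT)² = r(𝓛)`, where `𝓛 : A → A` is the bounded operator `𝓛(b) = T*(a*a)bT`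
on the Banach space `A`. -/
theorem stmt12 {H : Type*} [NormedAddCommGroup H] [InnerProductSpace ℂ H] [CompleteSpace H]
    (A : StarSubalgebra ℂ (H →L[ℂ] H)) (hA : IsClosed (A : Set (H →L[ℂ] H)))
    (hcomm : ∀ a ∈ A, ∀ b ∈ A, a * b = b * a)
    (T : H →L[ℂ] H) (hT : adjoint T * T = 1)
    (hA1 : ∀ a ∈ A, adjoint T * a * T ∈ A)
    (a : ↥A) (𝓛 : ↥A →L[ℂ] ↥A)
    (h𝓛 : ∀ b : ↥A, ((𝓛 b : ↥A) : H →L[ℂ] H) =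
      adjoint T * (star (a : H →L[ℂ] H) * (a : H →L[ℂ] H)) * (b : H →L[ℂ] H) * T) :
    spectralRadius ℂ ((a : H →L[ℂ] H) * T) ^ 2 = spectralRadius ℂ 𝓛 := by
  haveI : CompleteSpace (↥A) := hA.completeSpace_coe
  set u : H →L[ℂ] H := (a : H →L[ℂ] H) with hu
  -- key identity
  have key : ∀ (n : ℕ) (b : ↥A),
      ((𝓛 ^ n) b : H →L[ℂ] H) = star ((u * T) ^ n) * (b : H →L[ℂ] H) * (u * T) ^ n := by
    intro n
    induction n with
    | zero => intro b; simp
    | succ n ih =>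
      intro b
      have h1 : (𝓛 ^ (n + 1)) b = 𝓛 ((𝓛 ^ n) b) := by
        rw [pow_succ', ContinuousLinearMap.mul_apply]
      rw [h1, h𝓛, ih b]
      have hc : u * (star ((u * T) ^ n) * (b : H →L[ℂ] H) * (u * T) ^ n)
          = (star ((u * T) ^ n) * (b : H →L[ℂ] H) * (u * T) ^ n) * u := by
        rw [← ih b]
        exact hcomm u a.2 _ ((𝓛 ^ n) b).2
      rw [← ContinuousLinearMap.star_eq_adjoint, pow_succ, star_mul, star_mul]
      calc star T * (star u * u) * (star ((u * T) ^ n) * ↑b * (u * T) ^ n) * T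
          = star T * star u * (u * (star ((u * T) ^ n) * ↑b * (u * T) ^ n)) * T := by
            simp only [mul_assoc]
        _ = star T * star u * ((star ((u * T) ^ n) * ↑b * (u * T) ^ n) * u) * T := by rw [hc]
        _ = star T * star u * star ((u * T) ^ n) * ↑b * ((u * T) ^ n * (u * T)) := by
            simp only [mul_assoc]
  -- norm identity
  have hnorm : ∀ n : ℕ, ‖𝓛 ^ n‖₊ = ‖(u * T) ^ n‖₊ ^ 2 := by
    intro n
    apply le_antisymm
    · apply ContinuousLinearMap.opNNNorm_le_bound
      intro b
      have : ‖(𝓛 ^ n) b‖₊ = ‖((𝓛 ^ n) b : H →L[ℂ] H)‖₊ := rfl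
      rw [this, key n b]
      calc ‖star ((u * T) ^ n) * (b : H →L[ℂ] H) * (u * T) ^ n‖₊
          ≤ ‖star ((u * T) ^ n)‖₊ * ‖(b : H →L[ℂ] H)‖₊ * ‖(u * T) ^ n‖₊ :=
            le_trans (nnnorm_mul_le _ _) (by gcongr; exact nnnorm_mul_le _ _)
        _ = ‖(u * T) ^ n‖₊ ^ 2 * ‖b‖₊ := by rw [nnnorm_star]; show _ = _ * ‖(b : H →L[ℂ] H)‖₊; ring
    · have h1 : ‖(𝓛 ^ n) (1 : ↥A)‖₊ = ‖(u * T) ^ n‖₊ ^ 2 := by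
        have : ‖(𝓛 ^ n) (1 : ↥A)‖₊ = ‖((𝓛 ^ n) (1 : ↥A) : H →L[ℂ] H)‖₊ := rfl
        rw [this, key n 1]
        push_cast
        rw [mul_one, CStarRing.nnnorm_star_mul_self, sq]
      have h2 : ‖(𝓛 ^ n) (1 : ↥A)‖₊ ≤ ‖𝓛 ^ n‖₊ * ‖(1 : ↥A)‖₊ :=
        ContinuousLinearMap.le_opNNNorm _ _
      have h3 : ‖(1 : ↥A)‖₊ ≤ 1 := by
        have : ‖(1 : ↥A)‖₊ = ‖(1 : H →L[ℂ] H)‖₊ := rfl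
        rw [this]
        exact ContinuousLinearMap.norm_id_le
      calc ‖(u * T) ^ n‖₊ ^ 2 = ‖(𝓛 ^ n) (1 : ↥A)‖₊ := h1.symm
        _ ≤ ‖𝓛 ^ n‖₊ * ‖(1 : ↥A)‖₊ := h2
        _ ≤ ‖𝓛 ^ n‖₊ * 1 := by gcongr
        _ = ‖𝓛 ^ n‖₊ := mul_one _
  -- limits
  have lim1 := spectrum.pow_nnnorm_pow_one_div_tendsto_nhds_spectralRadius (u * T)
  have lim2 := spectrum.pow_nnnorm_pow_one_div_tendsto_nhds_spectralRadius 𝓛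
  have lim1sq : Filter.Tendsto (fun n : ℕ => ((‖(u * T) ^ n‖₊ : ℝ≥0∞) ^ (1 / n : ℝ)) ^ 2)
      Filter.atTop (nhds (spectralRadius ℂ (u * T) ^ 2)) :=
    ((ENNReal.continuous_pow 2).continuousAt).tendsto.comp lim1
  have heq : (fun n : ℕ => ((‖(u * T) ^ n‖₊ : ℝ≥0∞) ^ (1 / n : ℝ)) ^ 2)
      = fun n : ℕ => (‖𝓛 ^ n‖₊ : ℝ≥0∞) ^ (1 / n : ℝ) := by
    funext n
    rw [hnorm n]
    push_cast
    rw [← ENNReal.rpow_natCast (((‖(u * T) ^ n‖₊ : ℝ≥0∞)) ^ (1 / n : ℝ)) 2,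
      ← ENNReal.rpow_mul, ← ENNReal.rpow_natCast ((‖(u * T) ^ n‖₊ : ℝ≥0∞)) 2,
      ← ENNReal.rpow_mul, mul_comm]
  rw [heq] at lim1sq
  exact tendsto_nhds_unique lim1sq lim2
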